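/- Let m ≥ 2 and k ≥ 0 be integers. Then the composition operator C on L²(μ) is k-quasi-m-isometric if and only if both of the following hold: (a) for every r ∈ J_κ and i ∈ J_{η_r} the sequence (μ({x^r_{i,k+j+1}}))_{j∈ℤ₊} is a polynomial in j of degree at most m−2; (b) ∑_{p=0}^{m} (−1)^p binom(m,p) h_{p+k}(x_r) = 0 for every r ∈ J_κ. -/

import Mathlib

open MeasureTheory Finset

open scoped InnerProductSpace ComplexConjugate Classical
set_option linter.unusedSectionVars false
set_option maxHeartbeats 1000000

noncomputable section

/-- A real sequence indexed by the nonnegative integers is a polynomial in `n` of degree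
at most `d` if some real polynomial of degree at most `d` interpolates it. -/
def IsPolySeq (d : ℕ) (γ : ℕ → ℝ) : Prop :=
  ∃ q : Polynomial ℝ, q.natDegree ≤ d ∧ ∀ n : ℕ, q.eval (n : ℝ) = γ n

/-- `B_m(T) = ∑_{j=0}^m (-1)^j C(m,j) T*^{m-j} T^{m-j}`. -/
def BmOp {H : Type*} [NormedAddCommGroup H] [InnerProductSpace ℂ H] [CompleteSpace H]
    (m : ℕ) (T : H →L[ℂ] H) : H →L[ℂ] H :=
  ∑ j ∈ Finset.range (m + 1), ((-1 : ℂ) ^ j * (m.choose j : ℂ)) •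
    ((ContinuousLinearMap.adjoint T) ^ (m - j) * T ^ (m - j))

/-- `T` is a `k`-quasi-`m`-isometry, i.e. `T*^k B_m(T) T^k = 0`. -/
def IsQuasiIso {H : Type*} [NormedAddCommGroup H] [InnerProductSpace ℂ H] [CompleteSpace H]
    (k m : ℕ) (T : H →L[ℂ] H) : Prop :=
  (ContinuousLinearMap.adjoint T) ^ k * BmOp m T * T ^ k = 0

/-- The Radon–Nikodym derivative `h_p` of `μ ∘ φ^{-p}` with respect to `μ` in the discrete
setting: `h_p(x) = μ(φ^{-p}({x}))/μ({x})`. -/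
def hRN {X : Type*} [MeasurableSpace X] (μ : Measure X) (φ : X → X) (p : ℕ) (x : X) : ℝ :=
  (μ ((φ^[p]) ⁻¹' {x})).toReal / (μ {x}).toReal


section Toolkit

def binPoly (k : ℕ) : Polynomial ℝ := Polynomial.C ((k.factorial : ℝ)⁻¹) * descPochhammer ℝ k

lemma binPoly_natDegree (k : ℕ) : (binPoly k).natDegree ≤ k := by
  refine (Polynomial.natDegree_mul_le).trans ?_
  simp [descPochhammer_natDegree]

lemma binPoly_eval (k n : ℕ) : (binPoly k).eval (n : ℝ) = (n.choose k : ℝ) := by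
  have h := descPochhammer_eval_eq_descFactorial ℝ n k
  have h2 : (n.descFactorial k : ℝ) = (k.factorial : ℝ) * (n.choose k : ℝ) := by
    rw [← Nat.cast_mul, Nat.descFactorial_eq_factorial_mul_choose]
  have hk : (k.factorial : ℝ) ≠ 0 := Nat.cast_ne_zero.2 k.factorial_ne_zero
  simp [binPoly, h, h2]
  field_simp

lemma fwdDiff_iter_zero_fun (j : ℕ) : (fwdDiff (1:ℕ))^[j] (fun _ : ℕ => (0:ℝ)) = fun _ => 0 := by
  induction j with
  | zero => rfl
  | succ j ih => rw [Function.iterate_succ_apply, show fwdDiff (1:ℕ) (fun _ : ℕ => (0:ℝ)) = fun _ => 0 by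
      funext n; simp [fwdDiff], ih]

/-- If the `m`-th forward difference vanishes identically, the sequence is a polynomial of
degree at most `m - 1`. -/
lemma poly_of_fwdDiff (m : ℕ) (b : ℕ → ℝ) (hb : ∀ n, (fwdDiff (1:ℕ))^[m] b n = 0) :
    ∃ q : Polynomial ℝ, q.natDegree ≤ m - 1 ∧ ∀ n : ℕ, q.eval (n:ℝ) = b n := by
  have hbj : ∀ j, m ≤ j → ∀ n, (fwdDiff (1:ℕ))^[j] b n = 0 := by
    intro j hj n
    obtain ⟨i, rfl⟩ := Nat.exists_eq_add_of_le hj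
    rw [add_comm, Function.iterate_add_apply]
    rw [show (fwdDiff (1:ℕ))^[m] b = fun _ : ℕ => (0:ℝ) from funext hb, fwdDiff_iter_zero_fun]
  refine ⟨∑ k ∈ range m, Polynomial.C ((fwdDiff (1:ℕ))^[k] b 0) * binPoly k, ?_, ?_⟩
  · refine Polynomial.natDegree_sum_le_of_forall_le _ _ (fun k hk => ?_)
    refine Polynomial.natDegree_mul_le.trans ?_
    simp only [Polynomial.natDegree_C, zero_add]
    exact le_trans (binPoly_natDegree k) (Nat.le_sub_one_of_lt (mem_range.1 hk))
  · intro n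
    have hnewton := shift_eq_sum_fwdDiff_iter (1:ℕ) b n 0
    simp only [zero_add, smul_eq_mul, nsmul_eq_mul, Nat.cast_id, mul_one] at hnewton
    rw [Polynomial.eval_finset_sum]
    simp only [Polynomial.eval_mul, Polynomial.eval_C, binPoly_eval]
    rw [hnewton]
    have key : ∀ (s : Finset ℕ), range m ⊆ s → range (n+1) ⊆ s →
        (∑ k ∈ range m, (fwdDiff (1:ℕ))^[k] b 0 * (n.choose k : ℝ))
          = ∑ k ∈ range (n+1), (n.choose k : ℝ) * (fwdDiff (1:ℕ))^[k] b 0 := by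
      intro s hs1 hs2
      rw [Finset.sum_subset hs1 (fun k _ hk => by
        rw [hbj k (le_of_not_gt (fun h => hk (mem_range.2 h))) 0, zero_mul]),
        Finset.sum_subset hs2 (fun k _ hk => by
        have : n < k := lt_of_not_ge (fun h => hk (mem_range.2 (Nat.lt_succ_of_le h)))
        rw [Nat.choose_eq_zero_of_lt this, Nat.cast_zero, zero_mul])]
      exact Finset.sum_congr rfl (fun k _ => mul_comm _ _)
    exact key (range m ∪ range (n+1)) Finset.subset_union_left Finset.subset_union_right

lemma fwdDiff_eval_poly (q : Polynomial ℝ) :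
    fwdDiff (1:ℕ) (fun n : ℕ => q.eval (n:ℝ)) = fun n : ℕ => (q.comp (Polynomial.X + 1) - q).eval (n:ℝ) := by
  funext n
  simp only [fwdDiff, Polynomial.eval_sub, Polynomial.eval_comp, Polynomial.eval_add,
    Polynomial.eval_X, Polynomial.eval_one]
  push_cast
  ring

lemma degree_comp_sub_lt (q : Polynomial ℝ) (hq : q ≠ 0) :
    (q.comp (Polynomial.X + 1) - q).degree < q.degree := by
  have hX : (Polynomial.X + 1 : Polynomial ℝ).natDegree = 1 := by
    simpa using Polynomial.natDegree_X_add_C (1:ℝ)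
  have hlc : (q.comp (Polynomial.X + 1)).leadingCoeff = q.leadingCoeff := by
    rw [Polynomial.leadingCoeff_comp (by rw [hX]; norm_num)]
    have : (Polynomial.X + 1 : Polynomial ℝ).leadingCoeff = 1 := by
      simpa using Polynomial.leadingCoeff_X_add_C (1:ℝ)
    simp [this]
  have hne : q.comp (Polynomial.X + 1) ≠ 0 := by
    intro h
    apply hq
    rw [← Polynomial.leadingCoeff_eq_zero, ← hlc, h, Polynomial.leadingCoeff_zero]
  have hdeg : (q.comp (Polynomial.X + 1)).degree = q.degree := by
    rw [Polynomial.degree_eq_natDegree hne, Polynomial.degree_eq_natDegree hq]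
    rw [Polynomial.natDegree_comp, hX, mul_one]
  calc (q.comp (Polynomial.X + 1) - q).degree < (q.comp (Polynomial.X + 1)).degree :=
        Polynomial.degree_sub_lt hdeg hne hlc
    _ = q.degree := hdeg

/-- The `m`-th forward difference of a polynomial sequence of degree `< m` vanishes. -/
lemma fwdDiff_of_poly (m : ℕ) (q : Polynomial ℝ) (hq : q.degree < m) :
    ∀ n : ℕ, (fwdDiff (1:ℕ))^[m] (fun n : ℕ => q.eval (n:ℝ)) n = 0 := by
  induction m generalizing q with
  | zero =>
    intro n
    have : q = 0 := Polynomial.degree_eq_bot.mp (Nat.WithBot.lt_zero_iff.mp (by exact_mod_cast hq))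
    simp [this]
  | succ m ih =>
    intro n
    rw [Function.iterate_succ_apply, fwdDiff_eval_poly]
    by_cases h0 : q = 0
    · have : q.comp (Polynomial.X + 1) - q = 0 := by rw [h0]; simp
      rw [this]
      exact ih 0 (by simp [Polynomial.degree_zero]) n
    · exact ih _ (lt_of_lt_of_le (degree_comp_sub_lt q h0)
        (Polynomial.degree_le_of_natDegree_le (by
          exact_mod_cast Nat.lt_succ_iff.mp (by
            have := Polynomial.degree_eq_natDegree h0 ▸ hq
            exact_mod_cast this)))) n

/-- The basic alternating-sum identity. -/
lemma alt_sum_eq_fwdDiff (m : ℕ) (b : ℕ → ℝ) (n : ℕ) :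
    ∑ p ∈ range (m+1), (-1:ℝ)^p * (m.choose p : ℝ) * b (n+p)
      = (-1:ℝ)^m * (fwdDiff (1:ℕ))^[m] b n := by
  rw [fwdDiff_iter_eq_sum_shift]
  rw [Finset.mul_sum]
  refine Finset.sum_congr rfl (fun p hp => ?_)
  have hp' : p ≤ m := Nat.lt_succ_iff.mp (mem_range.mp hp)
  rw [zsmul_eq_mul, smul_eq_mul]
  push_cast
  rw [Nat.mul_one]
  have : (-1:ℝ)^m * ((-1:ℝ)^(m-p)) = (-1:ℝ)^p := by
    rw [← pow_add]
    have : m + (m - p) = 2*(m-p) + p := by omega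
    rw [this, pow_add, pow_mul]
    norm_num
  calc (-1:ℝ)^p * (m.choose p : ℝ) * b (n+p)
      = ((-1:ℝ)^m * ((-1:ℝ)^(m-p))) * (m.choose p : ℝ) * b (n+p) := by rw [this]
    _ = (-1:ℝ)^m * ((-1:ℝ)^(m-p) * (m.choose p : ℝ) * b (n+p)) := by ring

/-- Characterization: the alternating sum vanishes for all `n` iff the sequence is polynomial
of degree `≤ m - 1`. -/
lemma alt_sum_zero_iff_poly (m : ℕ) (hm : 1 ≤ m) (b : ℕ → ℝ) :
    (∀ n : ℕ, ∑ p ∈ range (m+1), (-1:ℝ)^p * (m.choose p : ℝ) * b (n+p) = 0)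
      ↔ ∃ q : Polynomial ℝ, q.natDegree ≤ m - 1 ∧ ∀ n : ℕ, q.eval (n:ℝ) = b n := by
  constructor
  · intro h
    apply poly_of_fwdDiff
    intro n
    have := h n
    rw [alt_sum_eq_fwdDiff] at this
    have hne : ((-1:ℝ)^m) ≠ 0 := by
      simp
    exact (mul_eq_zero.mp this).resolve_left hne
  · rintro ⟨q, hq, hqe⟩ n
    have h1 : ∑ p ∈ range (m+1), (-1:ℝ)^p * (m.choose p:ℝ) * b (n+p)
        = ∑ p ∈ range (m+1), (-1:ℝ)^p * (m.choose p:ℝ) * (fun t : ℕ => q.eval (t:ℝ)) (n+p) :=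
      Finset.sum_congr rfl fun p _ => by rw [← hqe]
    rw [h1, alt_sum_eq_fwdDiff m (fun t : ℕ => q.eval (t:ℝ)) n, fwdDiff_of_poly m q ?_, mul_zero]
    calc q.degree ≤ (q.natDegree : WithBot ℕ) := Polynomial.degree_le_natDegree
      _ < (m : WithBot ℕ) := by exact_mod_cast Nat.lt_of_le_of_lt hq (by omega)

lemma coeff_nonneg_of_nonneg (q : Polynomial ℝ) (d : ℕ) (hd : 1 ≤ d) (hq : q.natDegree ≤ d)
    (h : ∀ n : ℕ, 0 ≤ q.eval (n:ℝ)) : 0 ≤ q.coeff d := by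
  by_contra hneg
  push_neg at hneg
  have hne : q.coeff d ≠ 0 := ne_of_lt hneg
  have hdeg : q.natDegree = d := le_antisymm hq (Polynomial.le_natDegree_of_ne_zero hne)
  have hq0 : q ≠ 0 := fun h0 => hne (by simp [h0])
  have hlc : q.leadingCoeff ≤ 0 := by
    rw [Polynomial.leadingCoeff, hdeg]; exact le_of_lt hneg
  have hdpos : 0 < q.degree := by
    rw [Polynomial.degree_eq_natDegree hq0, hdeg]
    exact_mod_cast hd
  have htend := Polynomial.tendsto_atBot_of_leadingCoeff_nonpos q hdpos hlc
  have hev : ∀ᶠ x : ℝ in Filter.atTop, q.eval x ≤ -1 :=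
    htend.eventually (Filter.eventually_le_atBot (-1))
  obtain ⟨x₀, hx₀⟩ := Filter.eventually_atTop.mp hev
  have h1 := hx₀ (max x₀ 0 + 1) (by linarith [le_max_left x₀ 0])
  have h2 := h ⌈max x₀ 0 + 1⌉₊
  have h3 := hx₀ (⌈max x₀ 0 + 1⌉₊ : ℝ) (le_trans (by linarith [le_max_left x₀ 0]) (Nat.le_ceil _))
  linarith

lemma natDegree_le_pred_of_coeff_zero (q : Polynomial ℝ) (d : ℕ) (hq : q.natDegree ≤ d)
    (h : q.coeff d = 0) (hd : 1 ≤ d) : q.natDegree ≤ d - 1 := by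
  rw [Polynomial.natDegree_le_iff_coeff_eq_zero] at hq ⊢
  intro N hN
  rcases eq_or_lt_of_le (show d ≤ N by omega) with rfl | hlt
  · exact h
  · exact hq N hlt

lemma interp_repr (m : ℕ) (q : Polynomial ℝ) (hq : q.natDegree ≤ m - 1) (hm : 1 ≤ m) :
    q = ∑ j ∈ range m, Polynomial.C (q.eval (j:ℝ)) *
      Lagrange.basis (range m) (fun i : ℕ => (i:ℝ)) j := by
  have hinj : Set.InjOn (fun i : ℕ => (i:ℝ)) (range m : Finset ℕ) :=
    Nat.cast_injective.injOn
  have hdeg : q.degree < (range m).card := by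
    rw [Finset.card_range]
    calc q.degree ≤ (q.natDegree : WithBot ℕ) := Polynomial.degree_le_natDegree
      _ < (m : WithBot ℕ) := by exact_mod_cast Nat.lt_of_le_of_lt hq (by omega)
  have := Lagrange.eq_interpolate hinj hdeg
  rw [Lagrange.interpolate_apply] at this
  exact this

lemma eval_eq_sum_lagrange (m : ℕ) (hm : 1 ≤ m) (q : Polynomial ℝ) (hq : q.natDegree ≤ m - 1)
    (x : ℝ) : q.eval x = ∑ j ∈ range m, q.eval (j:ℝ) *
      (Lagrange.basis (range m) (fun i : ℕ => (i:ℝ)) j).eval x := by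
  conv_lhs => rw [interp_repr m q hq hm]
  rw [Polynomial.eval_finset_sum]
  exact Finset.sum_congr rfl fun j _ => by rw [Polynomial.eval_mul, Polynomial.eval_C]

lemma coeff_eq_sum_lagrange (m : ℕ) (hm : 1 ≤ m) (q : Polynomial ℝ) (hq : q.natDegree ≤ m - 1)
    (d : ℕ) : q.coeff d = ∑ j ∈ range m, q.eval (j:ℝ) *
      (Lagrange.basis (range m) (fun i : ℕ => (i:ℝ)) j).coeff d := by
  conv_lhs => rw [interp_repr m q hq hm]
  rw [Polynomial.finset_sum_coeff]
  exact Finset.sum_congr rfl fun j _ => by rw [Polynomial.coeff_C_mul]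

lemma seq_lagrange (m : ℕ) (hm : 1 ≤ m) (b : ℕ → ℝ)
    (h : ∃ q : Polynomial ℝ, q.natDegree ≤ m - 1 ∧ ∀ n : ℕ, q.eval (n:ℝ) = b n) (n : ℕ) :
    b n = ∑ j ∈ range m, b j * (Lagrange.basis (range m) (fun i : ℕ => (i:ℝ)) j).eval (n:ℝ) := by
  obtain ⟨q, hq, hqe⟩ := h
  rw [← hqe n, eval_eq_sum_lagrange m hm q hq]
  exact Finset.sum_congr rfl fun j _ => by rw [hqe j]

lemma seq_lagrange_coeff (m : ℕ) (hm : 1 ≤ m) (b : ℕ → ℝ) (d : ℕ) (q : Polynomial ℝ)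
    (hq : q.natDegree ≤ m - 1) (hqe : ∀ n : ℕ, q.eval (n:ℝ) = b n) :
    q.coeff d = ∑ j ∈ range m, b j *
      (Lagrange.basis (range m) (fun i : ℕ => (i:ℝ)) j).coeff d := by
  rw [coeff_eq_sum_lagrange m hm q hq d]
  exact Finset.sum_congr rfl fun j _ => by rw [hqe j]

lemma basis_natDeg (m j : ℕ) (hj : j ∈ range m) :
    (Lagrange.basis (range m) (fun i : ℕ => (i:ℝ)) j).natDegree = m - 1 := by
  rw [Lagrange.natDegree_basis Nat.cast_injective.injOn hj, Finset.card_range]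

end Toolkit

section OpRed
variable {X : Type*} [MeasurableSpace X] [Countable X]

lemma ae_to_everywhere {μ : Measure X} (hμ : ∀ x : X, 0 < μ {x}) {α : Type*} {f g : X → α}
    (h : f =ᵐ[μ] g) : f = g := by
  funext x
  by_contra hne
  have h0 : μ {a | ¬ f a = g a} = 0 := by
    exact MeasureTheory.ae_iff.mp h
  have hsub : ({x} : Set X) ⊆ {a | ¬ f a = g a} := by
    intro a ha
    rcases ha with rfl
    exact hne
  exact absurd (le_trans (measure_mono hsub) (le_of_eq h0)) (not_le.mpr (hμ x))

section Main

variable (hmeas : ∀ s : Set X, MeasurableSet s) (μ : Measure X)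
  (hμ : ∀ x : X, 0 < μ {x} ∧ μ {x} < ⊤) (φ : X → X)
  (C : Lp ℂ 2 μ →L[ℂ] Lp ℂ 2 μ)
  (hC : ∀ f : Lp ℂ 2 μ, (C f : X → ℂ) =ᵐ[μ] fun x => f (φ x))

/-- The normalized indicator functions. -/
def eVec (hmeas : ∀ s : Set X, MeasurableSet s) (μ : Measure X)
    (hμ : ∀ x : X, 0 < μ {x} ∧ μ {x} < ⊤) (y : X) : Lp ℂ 2 μ :=
  indicatorConstLp 2 (hmeas {y}) (hμ y).2.ne (1 : ℂ)

lemma eVec_coe (y : X) : (eVec hmeas μ hμ y : X → ℂ) = Set.indicator {y} (fun _ => (1:ℂ)) :=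
  ae_to_everywhere (fun x => (hμ x).1) indicatorConstLp_coeFn

include hμ hC in
lemma pow_apply_everywhere (n : ℕ) (f : Lp ℂ 2 μ) :
    ((C ^ n) f : X → ℂ) = fun x => f (φ^[n] x) := by
  induction n generalizing f with
  | zero =>
    simp only [pow_zero, ContinuousLinearMap.one_apply, Function.iterate_zero, id_eq]
  | succ n ih =>
    have h1 : (C ^ (n + 1)) f = (C ^ n) (C f) := by
      rw [pow_succ, ContinuousLinearMap.mul_apply]
    rw [h1, ih (C f)]
    have h2 : (C f : X → ℂ) = fun x => f (φ x) := ae_to_everywhere (fun x => (hμ x).1) (hC f)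
    funext x
    rw [h2, Function.iterate_succ_apply' φ n x]

include hμ hC in
lemma inner_pow_eVec (n : ℕ) (y z : X) :
    ⟪(C ^ n) (eVec hmeas μ hμ y), (C ^ n) (eVec hmeas μ hμ z)⟫_ℂ
      = if y = z then ((μ ((φ^[n]) ⁻¹' {y})).toReal : ℂ) else 0 := by
  rw [MeasureTheory.L2.inner_def]
  have hy := pow_apply_everywhere μ hμ φ C hC n (eVec hmeas μ hμ y)
  have hz := pow_apply_everywhere μ hμ φ C hC n (eVec hmeas μ hμ z)
  by_cases hyz : y = z
  · subst hyz
    rw [if_pos rfl]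
    have hint : (fun x => ⟪((C ^ n) (eVec hmeas μ hμ y) : X → ℂ) x,
        ((C ^ n) (eVec hmeas μ hμ y) : X → ℂ) x⟫_ℂ)
        = Set.indicator ((φ^[n]) ⁻¹' {y}) (fun _ => (1:ℂ)) := by
      funext x
      rw [hy, eVec_coe, RCLike.inner_apply]
      by_cases hx : φ^[n] x ∈ ({y} : Set X)
      · have hx' : x ∈ (φ^[n]) ⁻¹' {y} := hx
        simp [Set.indicator_of_mem hx, Set.indicator_of_mem hx']
      · have hx' : x ∉ (φ^[n]) ⁻¹' {y} := hx
        beta_reduce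
        rw [Set.indicator_of_notMem hx, Set.indicator_of_notMem hx']
        simp
    rw [hint, integral_indicator_const (1:ℂ) (hmeas _)]
    simp
    rfl
  · rw [if_neg hyz]
    have hint : (fun x => ⟪((C ^ n) (eVec hmeas μ hμ y) : X → ℂ) x,
        ((C ^ n) (eVec hmeas μ hμ z) : X → ℂ) x⟫_ℂ) = fun _ => (0:ℂ) := by
      funext x
      rw [hy, hz, eVec_coe, eVec_coe, RCLike.inner_apply]
      by_cases hx : φ^[n] x ∈ ({y} : Set X)
      · have hx' : φ^[n] x ∉ ({z} : Set X) := by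
          rcases hx with rfl; simpa using hyz
        beta_reduce
        rw [Set.indicator_of_notMem hx']
        simp
      · beta_reduce
        rw [Set.indicator_of_notMem hx]
        simp
    rw [hint]
    simp

include hmeas hμ C hC in
lemma fiber_finite (n : ℕ) (y : X) : μ ((φ^[n]) ⁻¹' {y}) < ⊤ := by
  have hint := MeasureTheory.L2.integrable_inner (𝕜 := ℂ)
    ((C ^ n) (eVec hmeas μ hμ y)) ((C ^ n) (eVec hmeas μ hμ y))
  have hy := pow_apply_everywhere μ hμ φ C hC n (eVec hmeas μ hμ y)
  have hfun : (fun x => ⟪((C ^ n) (eVec hmeas μ hμ y) : X → ℂ) x,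
      ((C ^ n) (eVec hmeas μ hμ y) : X → ℂ) x⟫_ℂ)
      = Set.indicator ((φ^[n]) ⁻¹' {y}) (fun _ => (1:ℂ)) := by
    funext x
    rw [hy, eVec_coe, RCLike.inner_apply]
    by_cases hx : φ^[n] x ∈ ({y} : Set X)
    · have hx' : x ∈ (φ^[n]) ⁻¹' {y} := hx
      simp [Set.indicator_of_mem hx, Set.indicator_of_mem hx']
    · have hx' : x ∉ (φ^[n]) ⁻¹' {y} := hx
      beta_reduce
      rw [Set.indicator_of_notMem hx, Set.indicator_of_notMem hx']
      simp
  rw [hfun] at hint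
  rw [integrable_indicator_iff (hmeas _)] at hint
  rcases (integrableOn_const_iff (C := (1:ℂ))).mp hint with h | h
  · exact absurd h (by simp)
  · exact h

include hμ hC in
lemma matrix_elt (m k : ℕ) (y z : X) :
    ⟪((ContinuousLinearMap.adjoint C) ^ k * BmOp m C * C ^ k) (eVec hmeas μ hμ y),
        eVec hmeas μ hμ z⟫_ℂ
      = if y = z then ((∑ j ∈ range (m+1), (-1:ℝ)^j * (m.choose j : ℝ) *
          (μ ((φ^[m - j + k]) ⁻¹' {y})).toReal : ℝ) : ℂ) else 0 := by
  have hadj : ∀ n : ℕ,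
      (ContinuousLinearMap.adjoint C) ^ n = ContinuousLinearMap.adjoint (C ^ n) := by
    intro n
    rw [← ContinuousLinearMap.star_eq_adjoint, ← ContinuousLinearMap.star_eq_adjoint, ← star_pow]
  rw [ContinuousLinearMap.mul_apply, ContinuousLinearMap.mul_apply, hadj k,
    ContinuousLinearMap.adjoint_inner_left]
  rw [BmOp, ContinuousLinearMap.sum_apply, sum_inner]
  have hterm : ∀ j ∈ range (m+1),
      ⟪(((-1:ℂ)^j * (m.choose j : ℂ)) •
          ((ContinuousLinearMap.adjoint C)^(m-j) * C^(m-j))) ((C^k) (eVec hmeas μ hμ y)),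
        (C^k) (eVec hmeas μ hμ z)⟫_ℂ
      = ((-1:ℂ)^j * (m.choose j : ℂ)) *
          (if y = z then ((μ ((φ^[m - j + k]) ⁻¹' {y})).toReal : ℂ) else 0) := by
    intro j hj
    rw [ContinuousLinearMap.smul_apply, inner_smul_left]
    have hconj : (starRingEnd ℂ) ((-1:ℂ)^j * (m.choose j : ℂ)) = (-1:ℂ)^j * (m.choose j : ℂ) := by
      simp
    rw [hconj]
    congr 1
    rw [ContinuousLinearMap.mul_apply, hadj (m-j), ContinuousLinearMap.adjoint_inner_left]
    rw [← ContinuousLinearMap.mul_apply (C^(m-j)) (C^k), ← pow_add,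
      ← ContinuousLinearMap.mul_apply (C^(m-j)) (C^k), ← pow_add]
    exact inner_pow_eVec hmeas μ hμ φ C hC (m - j + k) y z
  rw [Finset.sum_congr rfl hterm]
  by_cases hyz : y = z
  · simp only [if_pos hyz]
    push_cast
    exact Finset.sum_congr rfl fun j _ => by ring
  · simp [if_neg hyz]

include hmeas hμ in
lemma eq_zero_of_inner_eVec_zero (g : Lp ℂ 2 μ)
    (h : ∀ z : X, ⟪g, eVec hmeas μ hμ z⟫_ℂ = 0) : g = 0 := by
  have hg : ∀ z : X, (g : X → ℂ) z = 0 := by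
    intro z
    have h1 := h z
    rw [MeasureTheory.L2.inner_def] at h1
    have hfun : (fun x => ⟪(g : X → ℂ) x, (eVec hmeas μ hμ z : X → ℂ) x⟫_ℂ)
        = Set.indicator {z} (fun _ => (starRingEnd ℂ) ((g : X → ℂ) z)) := by
      funext x
      rw [eVec_coe, RCLike.inner_apply]
      by_cases hx : x ∈ ({z} : Set X)
      · rcases hx with rfl
        simp [Set.indicator_of_mem (Set.mem_singleton x)]
      · rw [Set.indicator_of_notMem hx, Set.indicator_of_notMem hx]
        simp
    rw [hfun, integral_indicator_const _ (hmeas _)] at h1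
    have : (starRingEnd ℂ) ((g : X → ℂ) z) = 0 := by
      rcases smul_eq_zero.mp h1 with h' | h'
      · exact absurd h' (ne_of_gt (ENNReal.toReal_pos (ne_of_gt (hμ z).1) (hμ z).2.ne))
      · exact h' 
    simpa using congrArg (starRingEnd ℂ) this
  refine MeasureTheory.Lp.ext ?_
  refine (Filter.EventuallyEq.of_eq (funext hg)).trans ?_
  exact (MeasureTheory.Lp.coeFn_zero ℂ 2 μ).symm

include hmeas hμ in
lemma op_eq_zero_of_eVec (T : Lp ℂ 2 μ →L[ℂ] Lp ℂ 2 μ)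
    (h : ∀ y : X, T (eVec hmeas μ hμ y) = 0) : T = 0 := by
  set K : Submodule ℂ (Lp ℂ 2 μ) := Submodule.span ℂ (Set.range (eVec hmeas μ hμ))
  have hKtop : K.topologicalClosure = ⊤ := by
    rw [Submodule.topologicalClosure_eq_top_iff]
    rw [Submodule.eq_bot_iff]
    intro g hg
    refine eq_zero_of_inner_eVec_zero hmeas μ hμ g (fun z => ?_)
    have := (Submodule.mem_orthogonal K g).mp hg (eVec hmeas μ hμ z)
      (Submodule.subset_span (Set.mem_range_self z))
    rw [← inner_conj_symm, this, map_zero]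
  have hker : K ≤ LinearMap.ker (T : Lp ℂ 2 μ →ₗ[ℂ] Lp ℂ 2 μ) := by
    rw [Submodule.span_le]
    rintro f ⟨y, rfl⟩
    exact h y
  have hclosed : IsClosed ((LinearMap.ker (T : Lp ℂ 2 μ →ₗ[ℂ] Lp ℂ 2 μ) : Submodule ℂ (Lp ℂ 2 μ)) : Set (Lp ℂ 2 μ)) := by
    exact ContinuousLinearMap.isClosed_ker T
  have h2 : K.topologicalClosure ≤ LinearMap.ker (T : Lp ℂ 2 μ →ₗ[ℂ] Lp ℂ 2 μ) :=
    Submodule.topologicalClosure_minimal K hker hclosed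
  rw [hKtop] at h2
  refine ContinuousLinearMap.ext fun f => ?_
  have : f ∈ LinearMap.ker (T : Lp ℂ 2 μ →ₗ[ℂ] Lp ℂ 2 μ) := h2 Submodule.mem_top
  simpa using this

include hmeas hμ hC in
lemma quasi_iff_pointwise (m k : ℕ) :
    IsQuasiIso k m C ↔ ∀ y : X, ∑ p ∈ range (m+1), (-1:ℝ)^p * (m.choose p : ℝ) *
      (μ ((φ^[p + k]) ⁻¹' {y})).toReal = 0 := by
  have hreflect : ∀ y : X,
      (∑ j ∈ range (m+1), (-1:ℝ)^j * (m.choose j : ℝ) * (μ ((φ^[m - j + k]) ⁻¹' {y})).toReal)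
      = (-1:ℝ)^m * ∑ p ∈ range (m+1), (-1:ℝ)^p * (m.choose p : ℝ) *
          (μ ((φ^[p + k]) ⁻¹' {y})).toReal := by
    intro y
    rw [← Finset.sum_range_reflect]
    rw [Finset.mul_sum]
    refine Finset.sum_congr rfl (fun p hp => ?_)
    have hp' : p ≤ m := Nat.lt_succ_iff.mp (mem_range.mp hp)
    rw [show m + 1 - 1 - p = m - p by omega, show m - (m - p) = p by omega,
      Nat.choose_symm hp']
    have hsign : (-1:ℝ)^(m-p) = (-1:ℝ)^m * (-1:ℝ)^p := by
      rw [← pow_add, show m + p = (m-p) + 2*p by omega, pow_add, pow_mul]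
      norm_num
    rw [hsign]
    ring
  constructor
  · intro hq y
    unfold IsQuasiIso at hq
    have h0 := matrix_elt hmeas μ hμ φ C hC m k y y
    rw [hq, ContinuousLinearMap.zero_apply, inner_zero_left, if_pos rfl] at h0
    have h1 : (∑ j ∈ range (m+1), (-1:ℝ)^j * (m.choose j : ℝ) *
        (μ ((φ^[m - j + k]) ⁻¹' {y})).toReal) = 0 := by exact_mod_cast h0.symm
    rw [hreflect y] at h1
    rcases mul_eq_zero.mp h1 with h' | h'
    · exact absurd h' (by simp)
    · exact h'
  · intro hpt
    unfold IsQuasiIso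
    refine op_eq_zero_of_eVec hmeas μ hμ _ (fun y => ?_)
    refine eq_zero_of_inner_eVec_zero hmeas μ hμ _ (fun z => ?_)
    rw [matrix_elt hmeas μ hμ φ C hC m k y z]
    by_cases hyz : y = z
    · rw [if_pos hyz, hreflect y, hpt y, mul_zero, Complex.ofReal_zero]
    · rw [if_neg hyz]

include hmeas in
lemma fiber_decomp (t : ℕ) (F : Set X) :
    μ (φ^[t] ⁻¹' F) = ∑' (y : F), μ (φ^[t] ⁻¹' {(y : X)}) := by
  have hU : φ^[t] ⁻¹' F = ⋃ y ∈ F, φ^[t] ⁻¹' {y} := by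
    ext x
    simp
  rw [hU, measure_biUnion (Set.to_countable F) ?_ (fun b _ => hmeas _)]
  intro a ha b hb hab
  rw [Function.onFun, Set.disjoint_left]
  intro x hxa hxb
  exact hab (by rw [← hxa, ← hxb])

include hmeas in
lemma shift_zero (c : ℕ → ℝ) (M k : ℕ)
    (hfin : ∀ (t : ℕ) (y : X), μ (φ^[t] ⁻¹' {y}) < ⊤)
    (hpt : ∀ y : X, ∑ p ∈ range M, c p * (μ (φ^[p + k] ⁻¹' {y})).toReal = 0) :
    ∀ (y : X) (n : ℕ), ∑ p ∈ range M, c p * (μ (φ^[n + (p + k)] ⁻¹' {y})).toReal = 0 := by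
  intro y n
  set F : Set X := φ^[n] ⁻¹' {y} with hF
  have hdec : ∀ p : ℕ, μ (φ^[n + (p + k)] ⁻¹' {y}) = ∑' (z : F), μ (φ^[p + k] ⁻¹' {(z : X)}) := by
    intro p
    rw [show n + (p + k) = n + (p + k) from rfl, Function.iterate_add φ n (p + k),
      Set.preimage_comp]
    exact fiber_decomp hmeas μ φ (p + k) F
  have hsummable : ∀ p : ℕ, Summable (fun z : F => (μ (φ^[p + k] ⁻¹' {(z : X)})).toReal) := by
    intro p
    apply ENNReal.summable_toReal
    rw [← hdec p]
    exact (hfin _ y).ne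
  have hterm : ∀ p ∈ range M, c p * (μ (φ^[n + (p + k)] ⁻¹' {y})).toReal
      = ∑' (z : F), c p * (μ (φ^[p + k] ⁻¹' {(z : X)})).toReal := by
    intro p _
    rw [hdec p, ENNReal.tsum_toReal_eq (fun z => (hfin _ _).ne), ← tsum_mul_left]
  rw [Finset.sum_congr rfl hterm, ← Summable.tsum_finsetSum (fun p _ => (hsummable p).mul_left (c p))]
  have : ∀ z : F, ∑ p ∈ range M, c p * (μ (φ^[p + k] ⁻¹' {(z : X)})).toReal = 0 :=
    fun z => hpt z
  rw [funext this]
  exact tsum_zero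

end Main


end OpRed

section Graph

variable (κ : ℕ) (Φ₂ : ℤ → ℕ)
    (hΦ₂ : ∀ q : ℤ, (1 ≤ Φ₂ q ∧ Φ₂ q ≤ κ) ∧ (κ : ℤ) ∣ q - (Φ₂ q : ℤ))
    {X : Type*} (η : ℕ → ℕ∞) (xc : ℕ → X) (xb : ℕ → ℕ → ℕ → X)
    (hinj₁ : ∀ r r' : ℕ, 1 ≤ r → r ≤ κ → 1 ≤ r' → r' ≤ κ → xc r = xc r' → r = r')
    (hinj₂ : ∀ r r' i j : ℕ, 1 ≤ r → r ≤ κ → 1 ≤ r' → r' ≤ κ → 1 ≤ i → (i : ℕ∞) ≤ η r' →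
      1 ≤ j → xc r ≠ xb r' i j)
    (hinj₃ : ∀ r i j r' i' j' : ℕ, 1 ≤ r → r ≤ κ → 1 ≤ i → (i : ℕ∞) ≤ η r → 1 ≤ j →
      1 ≤ r' → r' ≤ κ → 1 ≤ i' → (i' : ℕ∞) ≤ η r' → 1 ≤ j' →
      xb r i j = xb r' i' j' → r = r' ∧ i = i' ∧ j = j')
    (hsurj : ∀ x : X, (∃ r : ℕ, 1 ≤ r ∧ r ≤ κ ∧ x = xc r) ∨
      ∃ r i j : ℕ, 1 ≤ r ∧ r ≤ κ ∧ 1 ≤ i ∧ (i : ℕ∞) ≤ η r ∧ 1 ≤ j ∧ x = xb r i j)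
    (φ : X → X)
    (hφone : ∀ r i j : ℕ, 1 ≤ r → r ≤ κ → 1 ≤ i → (i : ℕ∞) ≤ η r → 1 ≤ j →
      φ (xb r i (j + 1)) = xb r i j)
    (hφtwo : ∀ r i : ℕ, 1 ≤ r → r ≤ κ → 1 ≤ i → (i : ℕ∞) ≤ η r → φ (xb r i 1) = xc r)
    (hφthree : ∀ r : ℕ, 1 ≤ r → r ≤ κ → φ (xc (Φ₂ ((r : ℤ) + 1))) = xc r)

include hΦ₂

lemma modeq_unique : ∀ a b : ℕ, 1 ≤ a → a ≤ κ → 1 ≤ b → b ≤ κ →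
    (κ : ℤ) ∣ (a : ℤ) - (b : ℤ) → a = b := by
  rintro a b ha1 ha2 hb1 hb2 hdvd
  by_contra hne
  rcases Nat.lt_or_ge a b with h | h
  · have h2 : (κ:ℤ) ∣ (b:ℤ) - a := by
      rw [show (b:ℤ) - a = -((a:ℤ) - b) by ring]
      exact dvd_neg.mpr hdvd
    have := Int.le_of_dvd (by omega) h2
    omega
  · have := Int.le_of_dvd (by omega : (0:ℤ) < (a:ℤ) - b) hdvd
    omega

lemma phi_mod : ∀ a b : ℤ, (κ : ℤ) ∣ a - b → Φ₂ a = Φ₂ b := by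
  intro a b hab
  have h1 := (hΦ₂ a).2
  have h2 := (hΦ₂ b).2
  refine modeq_unique κ Φ₂ hΦ₂ _ _ (hΦ₂ a).1.1 (hΦ₂ a).1.2 (hΦ₂ b).1.1 (hΦ₂ b).1.2 ?_
  have heq : (Φ₂ a : ℤ) - (Φ₂ b : ℤ) = ((a - b) + (b - Φ₂ b)) - (a - Φ₂ a) := by ring
  rw [heq]
  exact dvd_sub (dvd_add hab h2) h1

lemma phi_self : ∀ s : ℕ, 1 ≤ s → s ≤ κ → Φ₂ (s : ℤ) = s :=
  fun s h1 h2 =>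
    (modeq_unique κ Φ₂ hΦ₂ s _ h1 h2 (hΦ₂ s).1.1 (hΦ₂ s).1.2 (hΦ₂ (s:ℤ)).2).symm

lemma sigma_inv : ∀ s : ℕ, 1 ≤ s → s ≤ κ → Φ₂ ((Φ₂ ((s : ℤ) - 1) : ℤ) + 1) = s := by
  intro s h1 h2
  have hmod : Φ₂ ((Φ₂ ((s : ℤ) - 1) : ℤ) + 1) = Φ₂ (s : ℤ) := by
    refine phi_mod κ Φ₂ hΦ₂ _ _ ?_
    have hd := (hΦ₂ ((s : ℤ) - 1)).2
    have heq : ((Φ₂ ((s : ℤ) - 1) : ℤ) + 1) - (s : ℤ)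
        = -(((s : ℤ) - 1) - (Φ₂ ((s : ℤ) - 1) : ℤ)) := by ring
    rw [heq]
    exact dvd_neg.mpr hd
  rw [hmod, phi_self κ Φ₂ hΦ₂ s h1 h2]

include hφthree in
lemma phi_circ : ∀ s : ℕ, 1 ≤ s → s ≤ κ → φ (xc s) = xc (Φ₂ ((s : ℤ) - 1)) := by
  intro s h1 h2
  have hb := (hΦ₂ ((s : ℤ) - 1)).1
  have h := hφthree (Φ₂ ((s : ℤ) - 1)) hb.1 hb.2
  rw [sigma_inv κ Φ₂ hΦ₂ s h1 h2] at h
  exact h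

omit hΦ₂

include hinj₂ hinj₃ hsurj hφone hφtwo hφthree hΦ₂ in
lemma fiber_branch : ∀ r i j : ℕ, 1 ≤ r → r ≤ κ → 1 ≤ i → (i : ℕ∞) ≤ η r → 1 ≤ j →
    φ ⁻¹' {xb r i j} = {xb r i (j + 1)} := by
  intro r i j hr1 hr2 hi1 hi2 hj
  ext x
  simp only [Set.mem_preimage, Set.mem_singleton_iff]
  constructor
  · intro hx
    rcases hsurj x with ⟨s, hs1, hs2, rfl⟩ | ⟨s, i', j', hs1, hs2, hi1', hi2', hj', rfl⟩
    · exfalso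
      rw [phi_circ κ Φ₂ hΦ₂ xc φ hφthree s hs1 hs2] at hx
      have hb := (hΦ₂ ((s : ℤ) - 1)).1
      exact hinj₂ _ _ _ _ hb.1 hb.2 hr1 hr2 hi1 hi2 hj hx
    · rcases Nat.exists_eq_add_of_le hj' with ⟨j'', rfl⟩
      rcases Nat.eq_zero_or_pos j'' with rfl | hj''
      · exfalso
        rw [hφtwo s i' hs1 hs2 hi1' hi2'] at hx
        exact hinj₂ _ _ _ _ hs1 hs2 hr1 hr2 hi1 hi2 hj hx
      · rw [show 1 + j'' = (j'' - 1 + 1) + 1 by omega] at hx ⊢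
        rw [hφone s i' _ hs1 hs2 hi1' hi2' (by omega)] at hx
        obtain ⟨rfl, rfl, rfl⟩ := hinj₃ _ _ _ _ _ _ hs1 hs2 hi1' hi2' (by omega) hr1 hr2 hi1 hi2 hj hx
        rfl
  · rintro rfl
    exact hφone r i j hr1 hr2 hi1 hi2 hj

include hinj₂ hinj₃ hsurj hφone hφtwo hφthree hΦ₂ in
lemma fiber_branch_iter : ∀ (n : ℕ) (r i j : ℕ), 1 ≤ r → r ≤ κ → 1 ≤ i → (i : ℕ∞) ≤ η r →
    1 ≤ j → φ^[n] ⁻¹' {xb r i j} = {xb r i (j + n)} := by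
  intro n
  induction n with
  | zero => intro r i j _ _ _ _ _; simp
  | succ n ih =>
    intro r i j hr1 hr2 hi1 hi2 hj
    rw [Function.iterate_succ' φ n, Set.preimage_comp,
      fiber_branch κ Φ₂ hΦ₂ η xc xb hinj₂ hinj₃ hsurj φ hφone hφtwo hφthree r i j hr1 hr2 hi1 hi2 hj,
      ih r i (j+1) hr1 hr2 hi1 hi2 (by omega)]
    rw [show j + 1 + n = j + (n+1) by omega]

include hinj₁ hinj₂ hinj₃ hsurj hφone hφtwo hφthree hΦ₂ in
lemma fiber_circ : ∀ r : ℕ, 1 ≤ r → r ≤ κ →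
    φ ⁻¹' {xc r} = {xc (Φ₂ ((r : ℤ) + 1))} ∪ ⋃ i ∈ {i : ℕ | 1 ≤ i ∧ (i : ℕ∞) ≤ η r}, {xb r i 1} := by
  intro r hr1 hr2
  ext x
  simp only [Set.mem_preimage, Set.mem_singleton_iff, Set.mem_union, Set.mem_iUnion,
    Set.mem_setOf_eq, exists_prop]
  constructor
  · intro hx
    rcases hsurj x with ⟨s, hs1, hs2, rfl⟩ | ⟨s, i', j', hs1, hs2, hi1', hi2', hj', rfl⟩
    · left
      rw [phi_circ κ Φ₂ hΦ₂ xc φ hφthree s hs1 hs2] at hx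
      have hb := (hΦ₂ ((s : ℤ) - 1)).1
      have heq : Φ₂ ((s : ℤ) - 1) = r := hinj₁ _ _ hb.1 hb.2 hr1 hr2 hx
      have hb2 := (hΦ₂ ((r : ℤ) + 1)).1
      have : Φ₂ ((r : ℤ) + 1) = s := by
        refine modeq_unique κ Φ₂ hΦ₂ _ _ hb2.1 hb2.2 hs1 hs2 ?_
        have hd1 := (hΦ₂ ((r : ℤ) + 1)).2
        have hd2 := (hΦ₂ ((s : ℤ) - 1)).2
        have hd2' : (κ:ℤ) ∣ ((s:ℤ)-1) - (r:ℤ) := by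
          rw [← heq]
          exact hd2
        have heq2 : (Φ₂ ((r:ℤ)+1) : ℤ) - (s:ℤ) =
            -(((r:ℤ)+1) - (Φ₂ ((r:ℤ)+1) : ℤ)) - (((s:ℤ)-1) - (r:ℤ)) := by ring
        rw [heq2]
        exact dvd_sub (dvd_neg.mpr hd1) hd2' 
      rw [this]
    · rcases Nat.exists_eq_add_of_le hj' with ⟨j'', rfl⟩
      rcases Nat.eq_zero_or_pos j'' with rfl | hj''
      · right
        rw [hφtwo s i' hs1 hs2 hi1' hi2'] at hx
        have heq := hinj₁ _ _ hs1 hs2 hr1 hr2 hx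
        subst heq
        exact ⟨i', ⟨hi1', hi2'⟩, rfl⟩
      · exfalso
        rw [show 1 + j'' = (j'' - 1 + 1) + 1 by omega] at hx
        rw [hφone s i' _ hs1 hs2 hi1' hi2' (by omega)] at hx
        exact hinj₂ _ _ _ _ hr1 hr2 hs1 hs2 hi1' hi2' (by omega) hx.symm
  · rintro (rfl | ⟨i, ⟨hi1, hi2⟩, rfl⟩)
    · exact hφthree r hr1 hr2
    · exact hφtwo r i hr1 hr2 hi1 hi2

end Graph

theorem stmt7
    (κ : ℕ) (hκ : 1 ≤ κ)
    (Φ₂ : ℤ → ℕ)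
    (hΦ₂ : ∀ q : ℤ, (1 ≤ Φ₂ q ∧ Φ₂ q ≤ κ) ∧ (κ : ℤ) ∣ q - (Φ₂ q : ℤ))
    (X : Type*) [MeasurableSpace X] [Countable X]
    (hmeas : ∀ s : Set X, MeasurableSet s)
    (η : ℕ → ℕ∞)
    (hη : ∃ r : ℕ, 1 ≤ r ∧ r ≤ κ ∧ η r ≠ 0)
    (xc : ℕ → X) (xb : ℕ → ℕ → ℕ → X)
    (hinj₁ : ∀ r r' : ℕ, 1 ≤ r → r ≤ κ → 1 ≤ r' → r' ≤ κ → xc r = xc r' → r = r')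
    (hinj₂ : ∀ r r' i j : ℕ, 1 ≤ r → r ≤ κ → 1 ≤ r' → r' ≤ κ → 1 ≤ i → (i : ℕ∞) ≤ η r' →
      1 ≤ j → xc r ≠ xb r' i j)
    (hinj₃ : ∀ r i j r' i' j' : ℕ, 1 ≤ r → r ≤ κ → 1 ≤ i → (i : ℕ∞) ≤ η r → 1 ≤ j →
      1 ≤ r' → r' ≤ κ → 1 ≤ i' → (i' : ℕ∞) ≤ η r' → 1 ≤ j' →
      xb r i j = xb r' i' j' → r = r' ∧ i = i' ∧ j = j')
    (hsurj : ∀ x : X, (∃ r : ℕ, 1 ≤ r ∧ r ≤ κ ∧ x = xc r) ∨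
      ∃ r i j : ℕ, 1 ≤ r ∧ r ≤ κ ∧ 1 ≤ i ∧ (i : ℕ∞) ≤ η r ∧ 1 ≤ j ∧ x = xb r i j)
    (φ : X → X)
    (hφ₁ : ∀ r i j : ℕ, 1 ≤ r → r ≤ κ → 1 ≤ i → (i : ℕ∞) ≤ η r → 1 ≤ j →
      φ (xb r i (j + 1)) = xb r i j)
    (hφ₂ : ∀ r i : ℕ, 1 ≤ r → r ≤ κ → 1 ≤ i → (i : ℕ∞) ≤ η r → φ (xb r i 1) = xc r)
    (hφ₃ : ∀ r : ℕ, 1 ≤ r → r ≤ κ → φ (xc (Φ₂ ((r : ℤ) + 1))) = xc r)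
    (μ : Measure X) [SigmaFinite μ]
    (hμ : ∀ x : X, 0 < μ {x} ∧ μ {x} < ⊤)
    (C : Lp ℂ 2 μ →L[ℂ] Lp ℂ 2 μ)
    (hC : ∀ f : Lp ℂ 2 μ, (C f : X → ℂ) =ᵐ[μ] fun x => f (φ x))
    (m k : ℕ) (hm : 2 ≤ m) :
    IsQuasiIso k m C ↔
      ((∀ r i : ℕ, 1 ≤ r → r ≤ κ → 1 ≤ i → (i : ℕ∞) ≤ η r →
          IsPolySeq (m - 2) (fun j => (μ {xb r i (k + j + 1)}).toReal)) ∧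
        ∀ r : ℕ, 1 ≤ r → r ≤ κ →
          ∑ p ∈ Finset.range (m + 1),
            (-1 : ℝ) ^ p * (m.choose p : ℝ) * hRN μ φ (p + k) (xc r) = 0) := by
  classical
  have hm1 : 1 ≤ m := by omega
  have hfin : ∀ (t : ℕ) (y : X), μ (φ^[t] ⁻¹' {y}) < ⊤ := fiber_finite hmeas μ hμ φ C hC
  have hb_iter : ∀ (n r i j : ℕ), 1 ≤ r → r ≤ κ → 1 ≤ i → (i : ℕ∞) ≤ η r → 1 ≤ j →
      φ^[n] ⁻¹' {xb r i j} = {xb r i (j + n)} :=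
    fiber_branch_iter κ Φ₂ hΦ₂ η xc xb hinj₂ hinj₃ hsurj φ hφ₁ hφ₂ hφ₃
  have hcirc : ∀ r : ℕ, 1 ≤ r → r ≤ κ →
      φ ⁻¹' {xc r} = {xc (Φ₂ ((r : ℤ) + 1))} ∪
        ⋃ i ∈ {i : ℕ | 1 ≤ i ∧ (i : ℕ∞) ≤ η r}, {xb r i 1} :=
    fiber_circ κ Φ₂ hΦ₂ η xc xb hinj₁ hinj₂ hinj₃ hsurj φ hφ₁ hφ₂ hφ₃
  have hσb : ∀ r : ℕ, 1 ≤ Φ₂ ((r:ℤ)+1) ∧ Φ₂ ((r:ℤ)+1) ≤ κ := fun r => (hΦ₂ _).1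
  have hUiter : ∀ (r q n : ℕ), 1 ≤ r → r ≤ κ → 1 ≤ n →
      φ^[q] ⁻¹' (⋃ i ∈ {i : ℕ | 1 ≤ i ∧ (i : ℕ∞) ≤ η r}, {xb r i n})
        = ⋃ i ∈ {i : ℕ | 1 ≤ i ∧ (i : ℕ∞) ≤ η r}, {xb r i (n + q)} := by
    intro r q n hr1 hr2 hn
    rw [Set.preimage_iUnion₂]
    exact Set.iUnion₂_congr fun i hi => hb_iter q r i n hr1 hr2 hi.1 hi.2 hn
  have hUmeas : ∀ (r n : ℕ), 1 ≤ r → r ≤ κ → 1 ≤ n →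
      μ (⋃ i ∈ {i : ℕ | 1 ≤ i ∧ (i : ℕ∞) ≤ η r}, {xb r i n})
        = ∑' (i : {i : ℕ | 1 ≤ i ∧ (i : ℕ∞) ≤ η r}), μ {xb r (i:ℕ) n} := by
    intro r n hr1 hr2 hn
    refine measure_biUnion (Set.to_countable _) ?_ (fun b _ => hmeas _)
    intro a ha b hb hab
    rw [Function.onFun, Set.disjoint_left]
    rintro x rfl hxb
    exact hab ((hinj₃ r a n r b n hr1 hr2 ha.1 ha.2 hn hr1 hr2 hb.1 hb.2 hn hxb).2.1)
  have hrec : ∀ (r q : ℕ), 1 ≤ r → r ≤ κ →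
      μ (φ^[q+1] ⁻¹' {xc r}) = μ (φ^[q] ⁻¹' {xc (Φ₂ ((r:ℤ)+1))})
        + μ (⋃ i ∈ {i : ℕ | 1 ≤ i ∧ (i : ℕ∞) ≤ η r}, {xb r i (1 + q)}) := by
    intro r q hr1 hr2
    rw [Function.iterate_succ' φ q, Set.preimage_comp, hcirc r hr1 hr2, Set.preimage_union,
      hUiter r q 1 hr1 hr2 le_rfl]
    refine measure_union ?_ (hmeas _)
    rw [← hUiter r q 1 hr1 hr2 le_rfl]
    refine Disjoint.preimage _ ?_
    rw [Set.disjoint_left]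
    rintro x rfl hx2
    simp only [Set.mem_iUnion, Set.mem_singleton_iff, Set.mem_setOf_eq, exists_prop] at hx2
    obtain ⟨i, hi, heq⟩ := hx2
    exact hinj₂ _ r i 1 (hσb r).1 (hσb r).2 hr1 hr2 hi.1 hi.2 le_rfl heq
  have hpoint : ∀ r i t : ℕ, 1 ≤ r → r ≤ κ → 1 ≤ i → (i:ℕ∞) ≤ η r →
      φ^[t+1] (xb r i (t+1)) = xc r := by
    intro r i t hr1 hr2 hi1 hi2
    have hmem : xb r i (t+1) ∈ φ^[t] ⁻¹' {xb r i 1} := by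
      rw [hb_iter t r i 1 hr1 hr2 hi1 hi2 le_rfl]
      simp [show 1 + t = t + 1 by omega]
    have h1 : φ^[t] (xb r i (t+1)) = xb r i 1 := hmem
    rw [Function.iterate_succ_apply' φ t, h1, hφ₂ r i hr1 hr2 hi1 hi2]
  have hUfin : ∀ (r t : ℕ), 1 ≤ r → r ≤ κ →
      μ (⋃ i ∈ {i : ℕ | 1 ≤ i ∧ (i:ℕ∞) ≤ η r}, {xb r i (t+1)}) < ⊤ := by
    intro r t hr1 hr2
    refine lt_of_le_of_lt (measure_mono ?_) (hfin (t+1) (xc r))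
    intro x hx
    simp only [Set.mem_iUnion, Set.mem_singleton_iff, Set.mem_setOf_eq, exists_prop] at hx
    obtain ⟨i, hi, rfl⟩ := hx
    exact Set.mem_singleton_iff.mpr (hpoint r i t hr1 hr2 hi.1 hi.2)
  have hsummable' : ∀ (r j : ℕ), 1 ≤ r → r ≤ κ →
      Summable (fun i : {i : ℕ | 1 ≤ i ∧ (i:ℕ∞) ≤ η r} => (μ {xb r (i:ℕ) (k+1+j)}).toReal) := by
    intro r j hr1 hr2
    apply ENNReal.summable_toReal
    rw [← hUmeas r (k+1+j) hr1 hr2 (by omega), show k+1+j = (k+j)+1 by omega]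
    exact (hUfin r (k+j) hr1 hr2).ne
  have hueq' : ∀ (r j : ℕ), 1 ≤ r → r ≤ κ →
      (μ (⋃ i ∈ {i : ℕ | 1 ≤ i ∧ (i:ℕ∞) ≤ η r}, {xb r i (k+1+j)})).toReal
        = ∑' (i : {i : ℕ | 1 ≤ i ∧ (i:ℕ∞) ≤ η r}), (μ {xb r (i:ℕ) (k+1+j)}).toReal := by
    intro r j hr1 hr2
    rw [hUmeas r (k+1+j) hr1 hr2 (by omega), ENNReal.tsum_toReal_eq (fun i => (hμ _).2.ne)]
  have hswap : ∀ (r : ℕ), 1 ≤ r → r ≤ κ → ∀ g : ℕ → ℝ,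
      ∑' (i : {i : ℕ | 1 ≤ i ∧ (i:ℕ∞) ≤ η r}),
          (∑ j ∈ range m, (μ {xb r (i:ℕ) (k+1+j)}).toReal * g j)
        = ∑ j ∈ range m,
            (μ (⋃ i' ∈ {i : ℕ | 1 ≤ i ∧ (i:ℕ∞) ≤ η r}, {xb r i' (k+1+j)})).toReal * g j := by
    intro r hr1 hr2 g
    rw [Summable.tsum_finsetSum (fun j _ => Summable.mul_right (g j) (hsummable' r j hr1 hr2))]
    refine Finset.sum_congr rfl fun j _ => ?_
    rw [tsum_mul_right, hueq' r j hr1 hr2]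
  have hcircpt_iff : ∀ r : ℕ, 1 ≤ r → r ≤ κ →
      ((∑ p ∈ range (m+1), (-1:ℝ)^p * (m.choose p : ℝ) * (μ (φ^[p+k] ⁻¹' {xc r})).toReal = 0)
        ↔ (∑ p ∈ range (m+1), (-1:ℝ)^p * (m.choose p : ℝ) * hRN μ φ (p+k) (xc r) = 0)) := by
    intro r hr1 hr2
    have hc : (μ {xc r}).toReal ≠ 0 :=
      ne_of_gt (ENNReal.toReal_pos (ne_of_gt (hμ _).1) (hμ _).2.ne)
    have hkey : ∑ p ∈ range (m+1), (-1:ℝ)^p * (m.choose p:ℝ) * (μ (φ^[p+k] ⁻¹' {xc r})).toReal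
        = (∑ p ∈ range (m+1), (-1:ℝ)^p * (m.choose p:ℝ) * hRN μ φ (p+k) (xc r))
            * (μ {xc r}).toReal := by
      rw [Finset.sum_mul]
      refine Finset.sum_congr rfl fun p _ => ?_
      simp only [hRN]
      field_simp
    constructor
    · intro h
      rw [hkey] at h
      exact (mul_eq_zero.mp h).resolve_right hc
    · intro h
      rw [hkey, h, zero_mul]
  rw [quasi_iff_pointwise hmeas μ hμ φ C hC m k]
  constructor
  · intro hpt
    have hshift : ∀ (y : X) (n : ℕ), ∑ p ∈ range (m+1),
        (-1:ℝ)^p * (m.choose p : ℝ) * (μ (φ^[n + (p+k)] ⁻¹' {y})).toReal = 0 :=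
      shift_zero hmeas μ φ (fun p => (-1:ℝ)^p * (m.choose p : ℝ)) (m+1) k hfin hpt
    have hbranch_alt : ∀ r i : ℕ, 1 ≤ r → r ≤ κ → 1 ≤ i → (i:ℕ∞) ≤ η r → ∀ n : ℕ,
        ∑ p ∈ range (m+1), (-1:ℝ)^p * (m.choose p : ℝ) * (μ {xb r i (k+1+(n+p))}).toReal = 0 := by
      intro r i hr1 hr2 hi1 hi2 n
      calc ∑ p ∈ range (m+1), (-1:ℝ)^p * (m.choose p:ℝ) * (μ {xb r i (k+1+(n+p))}).toReal
          = ∑ p ∈ range (m+1), (-1:ℝ)^p * (m.choose p:ℝ)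
              * (μ (φ^[n+(p+k)] ⁻¹' {xb r i 1})).toReal := by
            refine Finset.sum_congr rfl fun p _ => ?_
            rw [hb_iter (n+(p+k)) r i 1 hr1 hr2 hi1 hi2 le_rfl,
              show 1+(n+(p+k)) = k+1+(n+p) by omega]
        _ = 0 := hshift (xb r i 1) n
    have hqex : ∀ r i : ℕ, 1 ≤ r → r ≤ κ → 1 ≤ i → (i:ℕ∞) ≤ η r →
        ∃ q : Polynomial ℝ, q.natDegree ≤ m - 1 ∧
          ∀ n : ℕ, q.eval (n:ℝ) = (μ {xb r i (k+1+n)}).toReal :=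
      fun r i hr1 hr2 hi1 hi2 =>
        (alt_sum_zero_iff_poly m hm1 (fun t => (μ {xb r i (k+1+t)}).toReal)).mp
          (hbranch_alt r i hr1 hr2 hi1 hi2)
    have hcirc_alt : ∀ r : ℕ, 1 ≤ r → r ≤ κ → ∀ n : ℕ,
        ∑ p ∈ range (m+1), (-1:ℝ)^p * (m.choose p:ℝ)
          * (μ (φ^[(n+p)+k] ⁻¹' {xc r})).toReal = 0 := by
      intro r hr1 hr2 n
      calc ∑ p ∈ range (m+1), (-1:ℝ)^p * (m.choose p:ℝ) * (μ (φ^[(n+p)+k] ⁻¹' {xc r})).toReal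
          = ∑ p ∈ range (m+1), (-1:ℝ)^p * (m.choose p:ℝ)
              * (μ (φ^[n+(p+k)] ⁻¹' {xc r})).toReal := by
            refine Finset.sum_congr rfl fun p _ => ?_
            rw [show (n+p)+k = n+(p+k) by omega]
        _ = 0 := hshift (xc r) n
    have hPex : ∀ r : ℕ, 1 ≤ r → r ≤ κ → ∃ P : Polynomial ℝ, P.natDegree ≤ m-1 ∧
        ∀ n : ℕ, P.eval (n:ℝ) = (μ (φ^[n+k] ⁻¹' {xc r})).toReal :=
      fun r hr1 hr2 =>
        (alt_sum_zero_iff_poly m hm1 (fun t => (μ (φ^[t+k] ⁻¹' {xc r})).toReal)).mp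
          (hcirc_alt r hr1 hr2)
    set Pol : ℕ → Polynomial ℝ := fun r => ∑ j ∈ range m,
      Polynomial.C ((μ (φ^[j+k] ⁻¹' {xc r})).toReal)
        * Lagrange.basis (range m) (fun i : ℕ => (i:ℝ)) j with hPoldef
    set Qol : ℕ → Polynomial ℝ := fun r => ∑ j ∈ range m,
      Polynomial.C ((μ (⋃ i ∈ {i : ℕ | 1 ≤ i ∧ (i:ℕ∞) ≤ η r}, {xb r i (k+1+j)})).toReal)
        * Lagrange.basis (range m) (fun i : ℕ => (i:ℝ)) j with hQoldef
    have hdegP : ∀ r : ℕ, (Pol r).natDegree ≤ m - 1 := by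
      intro r
      simp only [hPoldef]
      refine Polynomial.natDegree_sum_le_of_forall_le _ _ fun j hj => ?_
      refine Polynomial.natDegree_mul_le.trans ?_
      simp [basis_natDeg m j hj]
    have hdegQ : ∀ r : ℕ, (Qol r).natDegree ≤ m - 1 := by
      intro r
      simp only [hQoldef]
      refine Polynomial.natDegree_sum_le_of_forall_le _ _ fun j hj => ?_
      refine Polynomial.natDegree_mul_le.trans ?_
      simp [basis_natDeg m j hj]
    have hPoleval : ∀ r : ℕ, 1 ≤ r → r ≤ κ → ∀ n : ℕ,
        (Pol r).eval (n:ℝ) = (μ (φ^[n+k] ⁻¹' {xc r})).toReal := by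
      intro r hr1 hr2 n
      have h := seq_lagrange m hm1 (fun t => (μ (φ^[t+k] ⁻¹' {xc r})).toReal)
        (hPex r hr1 hr2) n
      rw [h]
      simp only [hPoldef, Polynomial.eval_finset_sum, Polynomial.eval_mul, Polynomial.eval_C]
    have hQeval : ∀ (r n : ℕ), 1 ≤ r → r ≤ κ →
        (μ (⋃ i ∈ {i : ℕ | 1 ≤ i ∧ (i:ℕ∞) ≤ η r}, {xb r i (k+1+n)})).toReal
          = ∑ j ∈ range m,
              (μ (⋃ i ∈ {i : ℕ | 1 ≤ i ∧ (i:ℕ∞) ≤ η r}, {xb r i (k+1+j)})).toReal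
                * (Lagrange.basis (range m) (fun i : ℕ => (i:ℝ)) j).eval (n:ℝ) := by
      intro r n hr1 hr2
      rw [hueq' r n hr1 hr2]
      rw [tsum_congr (fun (i : {i : ℕ | 1 ≤ i ∧ (i:ℕ∞) ≤ η r}) =>
        seq_lagrange m hm1 (fun t => (μ {xb r (i:ℕ) (k+1+t)}).toReal)
          (hqex r (i:ℕ) hr1 hr2 i.2.1 i.2.2) n)]
      exact hswap r hr1 hr2 (fun j => (Lagrange.basis (range m) (fun i : ℕ => (i:ℝ)) j).eval (n:ℝ))
    have hQoleval : ∀ r : ℕ, 1 ≤ r → r ≤ κ → ∀ n : ℕ, (Qol r).eval (n:ℝ)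
        = (μ (⋃ i ∈ {i : ℕ | 1 ≤ i ∧ (i:ℕ∞) ≤ η r}, {xb r i (k+1+n)})).toReal := by
      intro r hr1 hr2 n
      rw [hQeval r n hr1 hr2]
      simp only [hQoldef, Polynomial.eval_finset_sum, Polynomial.eval_mul, Polynomial.eval_C]
    have hPolrec : ∀ r : ℕ, 1 ≤ r → r ≤ κ → ∀ n : ℕ,
        (Pol r).eval (((n+1:ℕ)):ℝ) = (Pol (Φ₂ ((r:ℤ)+1))).eval (n:ℝ) + (Qol r).eval (n:ℝ) := by
      intro r hr1 hr2 n
      rw [hPoleval r hr1 hr2 (n+1), hPoleval (Φ₂ ((r:ℤ)+1)) (hσb r).1 (hσb r).2 n,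
        hQoleval r hr1 hr2 n]
      rw [show (n+1)+k = (n+k)+1 by omega, hrec r (n+k) hr1 hr2]
      rw [ENNReal.toReal_add (hfin _ _).ne (by
        rw [show 1+(n+k) = (n+k)+1 by omega]
        exact (hUfin r (n+k) hr1 hr2).ne)]
      rw [show 1+(n+k) = k+1+n by omega]
    have hσinv2 : ∀ r : ℕ, 1 ≤ r → r ≤ κ → Φ₂ ((Φ₂ ((r:ℤ)+1) : ℤ) - 1) = r := by
      intro r h1 h2
      have h3 : Φ₂ ((Φ₂ ((r:ℤ)+1) : ℤ) - 1) = Φ₂ (r:ℤ) := by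
        refine phi_mod κ Φ₂ hΦ₂ _ _ ?_
        have hd := (hΦ₂ ((r:ℤ)+1)).2
        have heq : ((Φ₂ ((r:ℤ)+1) : ℤ) - 1) - (r:ℤ)
            = -(((r:ℤ)+1) - (Φ₂ ((r:ℤ)+1) : ℤ)) := by ring
        rw [heq]
        exact dvd_neg.mpr hd
      rw [h3, phi_self κ Φ₂ hΦ₂ r h1 h2]
    have hreindex : ∀ g : ℕ → ℝ,
        ∑ r ∈ Finset.Icc 1 κ, g (Φ₂ ((r:ℤ)+1)) = ∑ r ∈ Finset.Icc 1 κ, g r := by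
      intro g
      refine Finset.sum_nbij' (fun r => Φ₂ ((r:ℤ)+1)) (fun s => Φ₂ ((s:ℤ)-1)) ?_ ?_ ?_ ?_ ?_
      · intro a ha
        simp only [Finset.mem_Icc] at ha ⊢
        exact (hσb a)
      · intro a ha
        simp only [Finset.mem_Icc] at ha ⊢
        exact (hΦ₂ _).1
      · intro a ha
        simp only [Finset.mem_Icc] at ha
        exact hσinv2 a ha.1 ha.2
      · intro a ha
        simp only [Finset.mem_Icc] at ha
        exact sigma_inv κ Φ₂ hΦ₂ a ha.1 ha.2
      · intro a _
        rfl
    have hSrec : ∀ n : ℕ, (∑ r ∈ Finset.Icc 1 κ, Pol r).eval (((n+1:ℕ)):ℝ)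
        = (∑ r ∈ Finset.Icc 1 κ, Pol r).eval (n:ℝ)
          + (∑ r ∈ Finset.Icc 1 κ, Qol r).eval (n:ℝ) := by
      intro n
      rw [Polynomial.eval_finset_sum, Polynomial.eval_finset_sum, Polynomial.eval_finset_sum]
      rw [Finset.sum_congr rfl (fun r hr =>
        hPolrec r (Finset.mem_Icc.mp hr).1 (Finset.mem_Icc.mp hr).2 n)]
      rw [Finset.sum_add_distrib]
      congr 1
      exact hreindex (fun s => (Pol s).eval (n:ℝ))
    have hdegS : (∑ r ∈ Finset.Icc 1 κ, Pol r).natDegree ≤ m - 1 :=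
      Polynomial.natDegree_sum_le_of_forall_le _ _ fun r _ => hdegP r
    have hzero : (∑ r ∈ Finset.Icc 1 κ, Qol r)
        = (∑ r ∈ Finset.Icc 1 κ, Pol r).comp (Polynomial.X + 1)
          - (∑ r ∈ Finset.Icc 1 κ, Pol r) := by
      have hroot : ∀ n : ℕ, ((∑ r ∈ Finset.Icc 1 κ, Pol r).comp (Polynomial.X + 1)
          - (∑ r ∈ Finset.Icc 1 κ, Pol r) - (∑ r ∈ Finset.Icc 1 κ, Qol r)).eval (n:ℝ) = 0 := by
        intro n
        simp only [Polynomial.eval_sub, Polynomial.eval_comp, Polynomial.eval_add,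
          Polynomial.eval_X, Polynomial.eval_one]
        have h := hSrec n
        push_cast at h
        linarith [h]
      have h0 : (∑ r ∈ Finset.Icc 1 κ, Pol r).comp (Polynomial.X + 1)
          - (∑ r ∈ Finset.Icc 1 κ, Pol r) - (∑ r ∈ Finset.Icc 1 κ, Qol r) = 0 := by
        refine Polynomial.eq_zero_of_infinite_isRoot _ ?_
        exact Set.infinite_of_injective_forall_mem (f := fun n : ℕ => (n:ℝ))
          Nat.cast_injective (fun n => hroot n)
      have := sub_eq_zero.mp h0
      exact this.symm
    have hcoeffR : (∑ r ∈ Finset.Icc 1 κ, Qol r).coeff (m-1) = 0 := by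
      rw [hzero]
      by_cases hS : (∑ r ∈ Finset.Icc 1 κ, Pol r) = 0
      · rw [hS]
        simp
      · refine Polynomial.coeff_eq_zero_of_degree_lt ?_
        refine lt_of_lt_of_le (degree_comp_sub_lt _ hS) ?_
        calc (∑ r ∈ Finset.Icc 1 κ, Pol r).degree
            ≤ ((∑ r ∈ Finset.Icc 1 κ, Pol r).natDegree : WithBot ℕ) :=
              Polynomial.degree_le_natDegree
          _ ≤ ((m-1 : ℕ) : WithBot ℕ) := by exact_mod_cast hdegS
    have hQnonneg : ∀ r : ℕ, 1 ≤ r → r ≤ κ → 0 ≤ (Qol r).coeff (m-1) := by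
      intro r hr1 hr2
      refine coeff_nonneg_of_nonneg (Qol r) (m-1) (by omega) (hdegQ r) ?_
      intro n
      rw [hQoleval r hr1 hr2 n]
      exact ENNReal.toReal_nonneg
    have hQzero : ∀ r : ℕ, 1 ≤ r → r ≤ κ → (Qol r).coeff (m-1) = 0 := by
      intro r hr1 hr2
      have hsum0 : ∑ r ∈ Finset.Icc 1 κ, (Qol r).coeff (m-1) = 0 := by
        rw [← Polynomial.finset_sum_coeff]
        exact hcoeffR
      exact (Finset.sum_eq_zero_iff_of_nonneg (fun r hr =>
        hQnonneg r (Finset.mem_Icc.mp hr).1 (Finset.mem_Icc.mp hr).2)).mp hsum0 r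
        (Finset.mem_Icc.mpr ⟨hr1, hr2⟩)
    have hQcoeff : ∀ r : ℕ, 1 ≤ r → r ≤ κ → (Qol r).coeff (m-1)
        = ∑' (i : {i : ℕ | 1 ≤ i ∧ (i:ℕ∞) ≤ η r}), ∑ j ∈ range m,
            (μ {xb r (i:ℕ) (k+1+j)}).toReal
              * (Lagrange.basis (range m) (fun i : ℕ => (i:ℝ)) j).coeff (m-1) := by
      intro r hr1 hr2
      rw [hswap r hr1 hr2
        (fun j => (Lagrange.basis (range m) (fun i : ℕ => (i:ℝ)) j).coeff (m-1))]
      simp only [hQoldef, Polynomial.finset_sum_coeff, Polynomial.coeff_C_mul]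
    have hbc_nonneg : ∀ r i : ℕ, 1 ≤ r → r ≤ κ → 1 ≤ i → (i:ℕ∞) ≤ η r →
        0 ≤ ∑ j ∈ range m, (μ {xb r i (k+1+j)}).toReal
          * (Lagrange.basis (range m) (fun i : ℕ => (i:ℝ)) j).coeff (m-1) := by
      intro r i hr1 hr2 hi1 hi2
      obtain ⟨q, hq, hqe⟩ := hqex r i hr1 hr2 hi1 hi2
      have hc := seq_lagrange_coeff m hm1 (fun t => (μ {xb r i (k+1+t)}).toReal) (m-1) q hq hqe
      rw [← hc]
      refine coeff_nonneg_of_nonneg q (m-1) (by omega) hq ?_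
      intro n
      rw [hqe n]
      exact ENNReal.toReal_nonneg
    have hbc_summable : ∀ r : ℕ, 1 ≤ r → r ≤ κ →
        Summable (fun i : {i : ℕ | 1 ≤ i ∧ (i:ℕ∞) ≤ η r} => ∑ j ∈ range m,
          (μ {xb r (i:ℕ) (k+1+j)}).toReal
            * (Lagrange.basis (range m) (fun i : ℕ => (i:ℝ)) j).coeff (m-1)) :=
      fun r hr1 hr2 => summable_sum (fun j _ => (hsummable' r j hr1 hr2).mul_right _)
    have hbc_zero : ∀ r i : ℕ, 1 ≤ r → r ≤ κ → 1 ≤ i → (i:ℕ∞) ≤ η r →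
        ∑ j ∈ range m, (μ {xb r i (k+1+j)}).toReal
          * (Lagrange.basis (range m) (fun i : ℕ => (i:ℝ)) j).coeff (m-1) = 0 := by
      intro r i hr1 hr2 hi1 hi2
      have hmem : (i : ℕ) ∈ {i : ℕ | 1 ≤ i ∧ (i:ℕ∞) ≤ η r} := ⟨hi1, hi2⟩
      have h1 := Summable.le_tsum (hbc_summable r hr1 hr2)
        (⟨i, hmem⟩ : {i : ℕ | 1 ≤ i ∧ (i:ℕ∞) ≤ η r})
        (fun j _ => hbc_nonneg r (j:ℕ) hr1 hr2 j.2.1 j.2.2)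
      rw [← hQcoeff r hr1 hr2, hQzero r hr1 hr2] at h1
      exact le_antisymm h1 (hbc_nonneg r i hr1 hr2 hi1 hi2)
    refine ⟨fun r i hr1 hr2 hi1 hi2 => ?_, fun r hr1 hr2 => ?_⟩
    · obtain ⟨q, hq, hqe⟩ := hqex r i hr1 hr2 hi1 hi2
      have hc := seq_lagrange_coeff m hm1 (fun t => (μ {xb r i (k+1+t)}).toReal) (m-1) q hq hqe
      have hc0 : q.coeff (m-1) = 0 := by
        rw [hc]
        exact hbc_zero r i hr1 hr2 hi1 hi2
      refine ⟨q, ?_, ?_⟩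
      · have h2 := natDegree_le_pred_of_coeff_zero q (m-1) hq hc0 (by omega)
        calc q.natDegree ≤ m - 1 - 1 := h2
          _ ≤ m - 2 := by omega
      · intro n
        show q.eval (n:ℝ) = (μ {xb r i (k + n + 1)}).toReal
        rw [show k+n+1 = k+1+n by omega]
        exact hqe n
    · exact (hcircpt_iff r hr1 hr2).mp (hpt (xc r))
  · rintro ⟨ha, hb⟩ y
    rcases hsurj y with ⟨r, hr1, hr2, rfl⟩ | ⟨r, i, j, hr1, hr2, hi1, hi2, hj, rfl⟩
    · exact (hcircpt_iff r hr1 hr2).mpr (hb r hr1 hr2)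
    · obtain ⟨q, hq, hqe⟩ := ha r i hr1 hr2 hi1 hi2
      have halt := (alt_sum_zero_iff_poly m hm1
        (fun n => (μ {xb r i (k+1+n)}).toReal)).mpr
        ⟨q, le_trans hq (by omega), fun n => by
          rw [show k+1+n = k+n+1 by omega]
          exact hqe n⟩
      calc ∑ p ∈ range (m+1), (-1:ℝ)^p * (m.choose p:ℝ)
            * (μ (φ^[p+k] ⁻¹' {xb r i j})).toReal
          = ∑ p ∈ range (m+1), (-1:ℝ)^p * (m.choose p:ℝ)
              * (μ {xb r i (k+1+((j-1)+p))}).toReal := by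
            refine Finset.sum_congr rfl fun p _ => ?_
            rw [hb_iter (p+k) r i j hr1 hr2 hi1 hi2 hj,
              show j+(p+k) = k+1+((j-1)+p) by omega]
        _ = 0 := halt (j - 1)
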